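/- Let m and n be positive multiples of 3. Then the domination number of the m×n king graph K_{m×n} is γ(K_{m×n}) = (m/3)·(n/3), and K_{m×n} has exactly one dominating set of this minimum size, namely the set of the (m/3)(n/3) center vertices of the 3×3 blocks tiling the board (the vertices (i,j) with i ≡ 2 (mod 3) and j ≡ 2 (mod 3)). -/

import Mathlib

open scoped Classical

/-- `S` is a dominating set of `G`: every vertex is in `S` or adjacent to a vertex of `S`. -/
def IsDominating {V : Type*} (G : SimpleGraph V) (S : Finset V) : Prop :=
  ∀ v : V, v ∈ S ∨ ∃ u ∈ S, G.Adj u v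

/-- The m×n king graph `P_m ⊠ P_n` (strong product of paths): vertices are pairs `(i, j)`
with `i : Fin m`, `j : Fin n`; two distinct vertices are adjacent iff their coordinates
differ by at most 1 in each component. -/
def kingGraph (m n : ℕ) : SimpleGraph (Fin m × Fin n) where
  Adj v w := v ≠ w ∧
    ((v.1 : ℕ) ≤ (w.1 : ℕ) + 1 ∧ (w.1 : ℕ) ≤ (v.1 : ℕ) + 1) ∧
    ((v.2 : ℕ) ≤ (w.2 : ℕ) + 1 ∧ (w.2 : ℕ) ≤ (v.2 : ℕ) + 1)
  symm := by
    constructor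
    intro v w h
    exact ⟨h.1.symm, ⟨h.2.1.2, h.2.1.1⟩, ⟨h.2.2.2, h.2.2.1⟩⟩
  loopless := by
    constructor
    intro v h
    exact h.1 rfl

section AuxKing

variable {m n p q : ℕ} {S : Finset (Fin m × Fin n)}

/-- Any dominating set of the king graph meets every 3×3 block (since the block's
center is dominated only from within the block). -/
lemma block_mem (hm3 : m = 3*p) (hn3 : n = 3*q)
    (hS : IsDominating (kingGraph m n) S)
    {a b : ℕ} (ha : a < p) (hb : b < q) :
    ∃ u ∈ S, (u.1 : ℕ)/3 = a ∧ (u.2 : ℕ)/3 = b := by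
  have h1 : 3*a+1 < m := by omega
  have h2 : 3*b+1 < n := by omega
  rcases hS (⟨3*a+1, h1⟩, ⟨3*b+1, h2⟩) with hc | ⟨u, hu, hadj⟩
  · exact ⟨_, hc, by simp only [Fin.val_mk]; omega, by simp only [Fin.val_mk]; omega⟩
  · obtain ⟨-, ⟨h3, h4⟩, h5, h6⟩ := hadj
    simp only [Fin.val_mk] at h3 h4 h5 h6
    exact ⟨u, hu, by omega, by omega⟩

/-- If a dominating set meets each block exactly once, no element has first
coordinate ≡ 0 (mod 3): such an element would force an infinite downward chain. -/
lemma no_row0 (hm3 : m = 3*p) (hn3 : n = 3*q) (hp : 0 < p)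
    (hS : IsDominating (kingGraph m n) S)
    (huniq : ∀ u ∈ S, ∀ v ∈ S, (u.1:ℕ)/3 = (v.1:ℕ)/3 → (u.2:ℕ)/3 = (v.2:ℕ)/3 → u = v)
    {s : Fin m × Fin n} (hs : s ∈ S) : (s.1 : ℕ) % 3 ≠ 0 := by
  have step : ∀ t ∈ S, (t.1:ℕ) % 3 = 0 → ∃ u ∈ S, (u.1:ℕ) = (t.1:ℕ) + 3 := by
    intro t ht h0
    have hlt1 := t.1.isLt
    have hlt2 := t.2.isLt
    set a := (t.1:ℕ)/3 with hadef
    set b := (t.2:ℕ)/3 with hbdef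
    have hta : (t.1:ℕ) = 3*a := by omega
    have h1 : 3*a+2 < m := by omega
    have h2 : 3*b+1 < n := by omega
    rcases hS (⟨3*a+2, h1⟩, ⟨3*b+1, h2⟩) with hc | ⟨u, hu, hadj⟩
    · exfalso
      have heq := huniq _ hc _ ht (by simp only [Fin.val_mk]; omega)
        (by simp only [Fin.val_mk]; omega)
      have : ((3*a+2 : ℕ) : ℕ) = (t.1:ℕ) := by
        have := congrArg (fun x : Fin m × Fin n => (x.1:ℕ)) heq
        simpa using this
      omega
    · obtain ⟨-, ⟨h3, h4⟩, h5, h6⟩ := hadj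
      simp only [Fin.val_mk] at h3 h4 h5 h6
      by_cases hle : (u.1:ℕ) ≤ 3*a+2
      · exfalso
        have heq := huniq _ hu _ ht (by omega) (by omega)
        have : (u.1:ℕ) = (t.1:ℕ) := by rw [heq]
        omega
      · exact ⟨u, hu, by omega⟩
  have iter : ∀ j, ∀ t ∈ S, (t.1:ℕ) % 3 = 0 → ∃ u ∈ S, (u.1:ℕ) = (t.1:ℕ) + 3*j := by
    intro j
    induction j with
    | zero => exact fun t ht _ => ⟨t, ht, by omega⟩
    | succ j ih =>
      intro t ht h0
      obtain ⟨u, hu, hu1⟩ := step t ht h0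
      obtain ⟨w, hw, hw1⟩ := ih u hu (by omega)
      exact ⟨w, hw, by omega⟩
  intro h0
  obtain ⟨u, hu, hu1⟩ := iter m s hs h0
  have := u.1.isLt
  omega

/-- No element has first coordinate ≡ 2 (mod 3). -/
lemma no_row2 (hm3 : m = 3*p) (hn3 : n = 3*q) (hp : 0 < p)
    (hS : IsDominating (kingGraph m n) S)
    (huniq : ∀ u ∈ S, ∀ v ∈ S, (u.1:ℕ)/3 = (v.1:ℕ)/3 → (u.2:ℕ)/3 = (v.2:ℕ)/3 → u = v)
    {s : Fin m × Fin n} (hs : s ∈ S) : (s.1 : ℕ) % 3 ≠ 2 := by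
  have step : ∀ t ∈ S, (t.1:ℕ) % 3 = 2 → ∃ u ∈ S, (u.1:ℕ) + 3 = (t.1:ℕ) := by
    intro t ht h0
    have hlt1 := t.1.isLt
    have hlt2 := t.2.isLt
    set a := (t.1:ℕ)/3 with hadef
    set b := (t.2:ℕ)/3 with hbdef
    have hta : (t.1:ℕ) = 3*a+2 := by omega
    have h1 : 3*a < m := by omega
    have h2 : 3*b+1 < n := by omega
    rcases hS (⟨3*a, h1⟩, ⟨3*b+1, h2⟩) with hc | ⟨u, hu, hadj⟩
    · exfalso
      have heq := huniq _ hc _ ht (by simp only [Fin.val_mk]; omega)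
        (by simp only [Fin.val_mk]; omega)
      have : ((3*a : ℕ) : ℕ) = (t.1:ℕ) := by
        have := congrArg (fun x : Fin m × Fin n => (x.1:ℕ)) heq
        simpa using this
      omega
    · obtain ⟨-, ⟨h3, h4⟩, h5, h6⟩ := hadj
      simp only [Fin.val_mk] at h3 h4 h5 h6
      by_cases hge : 3*a ≤ (u.1:ℕ)
      · exfalso
        have heq := huniq _ hu _ ht (by omega) (by omega)
        have : (u.1:ℕ) = (t.1:ℕ) := by rw [heq]
        omega
      · exact ⟨u, hu, by omega⟩
  have iter : ∀ j, ∀ t ∈ S, (t.1:ℕ) % 3 = 2 → ∃ u ∈ S, (u.1:ℕ) + 3*j = (t.1:ℕ) := by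
    intro j
    induction j with
    | zero => exact fun t ht _ => ⟨t, ht, by omega⟩
    | succ j ih =>
      intro t ht h0
      obtain ⟨u, hu, hu1⟩ := step t ht h0
      obtain ⟨w, hw, hw1⟩ := ih u hu (by omega)
      exact ⟨w, hw, by omega⟩
  intro h0
  have hlt1 := s.1.isLt
  obtain ⟨u, hu, hu1⟩ := iter m s hs h0
  omega

/-- No element has second coordinate ≡ 0 (mod 3). -/
lemma no_col0 (hm3 : m = 3*p) (hn3 : n = 3*q) (hq : 0 < q)
    (hS : IsDominating (kingGraph m n) S)
    (huniq : ∀ u ∈ S, ∀ v ∈ S, (u.1:ℕ)/3 = (v.1:ℕ)/3 → (u.2:ℕ)/3 = (v.2:ℕ)/3 → u = v)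
    {s : Fin m × Fin n} (hs : s ∈ S) : (s.2 : ℕ) % 3 ≠ 0 := by
  have step : ∀ t ∈ S, (t.2:ℕ) % 3 = 0 → ∃ u ∈ S, (u.2:ℕ) = (t.2:ℕ) + 3 := by
    intro t ht h0
    have hlt1 := t.1.isLt
    have hlt2 := t.2.isLt
    set a := (t.1:ℕ)/3 with hadef
    set b := (t.2:ℕ)/3 with hbdef
    have htb : (t.2:ℕ) = 3*b := by omega
    have h1 : 3*a+1 < m := by omega
    have h2 : 3*b+2 < n := by omega
    rcases hS (⟨3*a+1, h1⟩, ⟨3*b+2, h2⟩) with hc | ⟨u, hu, hadj⟩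
    · exfalso
      have heq := huniq _ hc _ ht (by simp only [Fin.val_mk]; omega)
        (by simp only [Fin.val_mk]; omega)
      have : ((3*b+2 : ℕ) : ℕ) = (t.2:ℕ) := by
        have := congrArg (fun x : Fin m × Fin n => (x.2:ℕ)) heq
        simpa using this
      omega
    · obtain ⟨-, ⟨h3, h4⟩, h5, h6⟩ := hadj
      simp only [Fin.val_mk] at h3 h4 h5 h6
      by_cases hle : (u.2:ℕ) ≤ 3*b+2
      · exfalso
        have heq := huniq _ hu _ ht (by omega) (by omega)
        have : (u.2:ℕ) = (t.2:ℕ) := by rw [heq]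
        omega
      · exact ⟨u, hu, by omega⟩
  have iter : ∀ j, ∀ t ∈ S, (t.2:ℕ) % 3 = 0 → ∃ u ∈ S, (u.2:ℕ) = (t.2:ℕ) + 3*j := by
    intro j
    induction j with
    | zero => exact fun t ht _ => ⟨t, ht, by omega⟩
    | succ j ih =>
      intro t ht h0
      obtain ⟨u, hu, hu1⟩ := step t ht h0
      obtain ⟨w, hw, hw1⟩ := ih u hu (by omega)
      exact ⟨w, hw, by omega⟩
  intro h0
  obtain ⟨u, hu, hu1⟩ := iter n s hs h0
  have := u.2.isLt
  omega

/-- No element has second coordinate ≡ 2 (mod 3). -/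
lemma no_col2 (hm3 : m = 3*p) (hn3 : n = 3*q) (hq : 0 < q)
    (hS : IsDominating (kingGraph m n) S)
    (huniq : ∀ u ∈ S, ∀ v ∈ S, (u.1:ℕ)/3 = (v.1:ℕ)/3 → (u.2:ℕ)/3 = (v.2:ℕ)/3 → u = v)
    {s : Fin m × Fin n} (hs : s ∈ S) : (s.2 : ℕ) % 3 ≠ 2 := by
  have step : ∀ t ∈ S, (t.2:ℕ) % 3 = 2 → ∃ u ∈ S, (u.2:ℕ) + 3 = (t.2:ℕ) := by
    intro t ht h0
    have hlt1 := t.1.isLt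
    have hlt2 := t.2.isLt
    set a := (t.1:ℕ)/3 with hadef
    set b := (t.2:ℕ)/3 with hbdef
    have htb : (t.2:ℕ) = 3*b+2 := by omega
    have h1 : 3*a+1 < m := by omega
    have h2 : 3*b < n := by omega
    rcases hS (⟨3*a+1, h1⟩, ⟨3*b, h2⟩) with hc | ⟨u, hu, hadj⟩
    · exfalso
      have heq := huniq _ hc _ ht (by simp only [Fin.val_mk]; omega)
        (by simp only [Fin.val_mk]; omega)
      have : ((3*b : ℕ) : ℕ) = (t.2:ℕ) := by
        have := congrArg (fun x : Fin m × Fin n => (x.2:ℕ)) heq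
        simpa using this
      omega
    · obtain ⟨-, ⟨h3, h4⟩, h5, h6⟩ := hadj
      simp only [Fin.val_mk] at h3 h4 h5 h6
      by_cases hge : 3*b ≤ (u.2:ℕ)
      · exfalso
        have heq := huniq _ hu _ ht (by omega) (by omega)
        have : (u.2:ℕ) = (t.2:ℕ) := by rw [heq]
        omega
      · exact ⟨u, hu, by omega⟩
  have iter : ∀ j, ∀ t ∈ S, (t.2:ℕ) % 3 = 2 → ∃ u ∈ S, (u.2:ℕ) + 3*j = (t.2:ℕ) := by
    intro j
    induction j with
    | zero => exact fun t ht _ => ⟨t, ht, by omega⟩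
    | succ j ih =>
      intro t ht h0
      obtain ⟨u, hu, hu1⟩ := step t ht h0
      obtain ⟨w, hw, hw1⟩ := ih u hu (by omega)
      exact ⟨w, hw, by omega⟩
  intro h0
  have hlt2 := s.2.isLt
  obtain ⟨u, hu, hu1⟩ := iter n s hs h0
  omega

end AuxKing

/-- Let `m, n` be positive multiples of 3. The domination number of the m×n king graph is
`(m/3)·(n/3)`, and the unique minimum dominating set is the set of the centers of the
3×3 blocks tiling the board (in 0-based coordinates, the vertices `(i, j)` with
`i ≡ 1 (mod 3)` and `j ≡ 1 (mod 3)`). -/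
theorem kingGraph_domination (m n : ℕ) (hm : 0 < m) (hn : 0 < n)
    (h3m : 3 ∣ m) (h3n : 3 ∣ n) :
    IsDominating (kingGraph m n)
      (Finset.univ.filter
        (fun v : Fin m × Fin n => (v.1 : ℕ) % 3 = 1 ∧ (v.2 : ℕ) % 3 = 1)) ∧
    (Finset.univ.filter
        (fun v : Fin m × Fin n => (v.1 : ℕ) % 3 = 1 ∧ (v.2 : ℕ) % 3 = 1)).card =
      (m / 3) * (n / 3) ∧
    (∀ S : Finset (Fin m × Fin n), IsDominating (kingGraph m n) S →
      (m / 3) * (n / 3) ≤ S.card) ∧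
    (∀ S : Finset (Fin m × Fin n), IsDominating (kingGraph m n) S →
      S.card = (m / 3) * (n / 3) →
      S = Finset.univ.filter
        (fun v : Fin m × Fin n => (v.1 : ℕ) % 3 = 1 ∧ (v.2 : ℕ) % 3 = 1)) := by
  obtain ⟨p, hm3⟩ := h3m
  obtain ⟨q, hn3⟩ := h3n
  have hp : 0 < p := by omega
  have hq : 0 < q := by omega
  have e1 : m/3 = p := by omega
  have e2 : n/3 = q := by omega
  -- the projection to block coordinates
  set π : Fin m × Fin n → ℕ × ℕ := fun v => ((v.1:ℕ)/3, (v.2:ℕ)/3) with hπ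
  have hsub : ∀ S : Finset (Fin m × Fin n), IsDominating (kingGraph m n) S →
      Finset.range p ×ˢ Finset.range q ⊆ S.image π := by
    intro S hS x hx
    rw [Finset.mem_product, Finset.mem_range, Finset.mem_range] at hx
    obtain ⟨u, hu, h1, h2⟩ := block_mem hm3 hn3 hS hx.1 hx.2
    rw [Finset.mem_image]
    exact ⟨u, hu, by rw [hπ]; exact Prod.ext h1 h2⟩
  -- part 1: the set of centers is dominating
  have part1 : IsDominating (kingGraph m n)
      (Finset.univ.filter
        (fun v : Fin m × Fin n => (v.1 : ℕ) % 3 = 1 ∧ (v.2 : ℕ) % 3 = 1)) := by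
    intro v
    have hv1 := v.1.isLt
    have hv2 := v.2.isLt
    have h1 : 3*((v.1:ℕ)/3)+1 < m := by omega
    have h2 : 3*((v.2:ℕ)/3)+1 < n := by omega
    set c : Fin m × Fin n := (⟨3*((v.1:ℕ)/3)+1, h1⟩, ⟨3*((v.2:ℕ)/3)+1, h2⟩) with hc
    have hcT : c ∈ Finset.univ.filter
        (fun v : Fin m × Fin n => (v.1 : ℕ) % 3 = 1 ∧ (v.2 : ℕ) % 3 = 1) := by
      simp only [Finset.mem_filter, Finset.mem_univ, true_and, hc]
      constructor <;> omega
    by_cases hcv : c = v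
    · left; rwa [hcv] at hcT
    · right
      refine ⟨c, hcT, hcv, ⟨?_, ?_⟩, ⟨?_, ?_⟩⟩ <;>
        simp only [hc, Fin.val_mk] <;> omega
  -- part 2: cardinality of the set of centers
  have part2 : (Finset.univ.filter
      (fun v : Fin m × Fin n => (v.1 : ℕ) % 3 = 1 ∧ (v.2 : ℕ) % 3 = 1)).card =
      (m / 3) * (n / 3) := by
    rw [e1, e2, show p*q = (Finset.univ : Finset (Fin p × Fin q)).card by
      simp [Finset.card_univ]]
    apply Finset.card_nbij'
      (i := fun (v : Fin m × Fin n) =>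
        ((⟨(v.1:ℕ)/3, by have := v.1.isLt; omega⟩ : Fin p),
         (⟨(v.2:ℕ)/3, by have := v.2.isLt; omega⟩ : Fin q)))
      (j := fun (w : Fin p × Fin q) =>
        ((⟨3*(w.1:ℕ)+1, by have := w.1.isLt; omega⟩ : Fin m),
         (⟨3*(w.2:ℕ)+1, by have := w.2.isLt; omega⟩ : Fin n)))
    · intro a ha
      exact Finset.mem_univ _
    · intro a ha
      simp only [Finset.coe_filter, Set.mem_setOf_eq, Finset.mem_filter, Finset.mem_univ, true_and, Fin.val_mk]
      omega
    · intro a ha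
      simp only [Finset.coe_filter, Set.mem_setOf_eq, Finset.mem_filter, Finset.mem_univ, true_and] at ha
      ext <;> simp only [Fin.val_mk] <;> omega
    · intro a ha
      ext <;> simp only [Fin.val_mk] <;> omega
  -- part 3: lower bound
  have part3 : ∀ S : Finset (Fin m × Fin n), IsDominating (kingGraph m n) S →
      (m / 3) * (n / 3) ≤ S.card := by
    intro S hS
    calc (m/3) * (n/3) = (Finset.range p ×ˢ Finset.range q).card := by
          rw [Finset.card_product, Finset.card_range, Finset.card_range, e1, e2]
      _ ≤ (S.image π).card := Finset.card_le_card (hsub S hS)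
      _ ≤ S.card := Finset.card_image_le
  refine ⟨part1, part2, part3, ?_⟩
  -- part 4: uniqueness
  intro S hS hcardS
  rw [e1, e2] at hcardS
  have hle1 : (S.image π).card ≤ S.card := Finset.card_image_le
  have hge : p * q ≤ (S.image π).card := by
    calc p * q = (Finset.range p ×ˢ Finset.range q).card := by
          rw [Finset.card_product, Finset.card_range, Finset.card_range]
      _ ≤ (S.image π).card := Finset.card_le_card (hsub S hS)
  have heqcard : (S.image π).card = S.card := by omega
  have hinj : Set.InjOn π S := Finset.injOn_of_card_image_eq heqcard
  have huniq : ∀ u ∈ S, ∀ v ∈ S,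
      (u.1:ℕ)/3 = (v.1:ℕ)/3 → (u.2:ℕ)/3 = (v.2:ℕ)/3 → u = v := by
    intro u hu v hv h1 h2
    exact hinj (Finset.mem_coe.mpr hu) (Finset.mem_coe.mpr hv) (Prod.ext h1 h2)
  have hST : S ⊆ Finset.univ.filter
      (fun v : Fin m × Fin n => (v.1 : ℕ) % 3 = 1 ∧ (v.2 : ℕ) % 3 = 1) := by
    intro s hs
    have r0 := no_row0 hm3 hn3 hp hS huniq hs
    have r2 := no_row2 hm3 hn3 hp hS huniq hs
    have c0 := no_col0 hm3 hn3 hq hS huniq hs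
    have c2 := no_col2 hm3 hn3 hq hS huniq hs
    simp only [Finset.mem_filter, Finset.mem_univ, true_and]
    omega
  exact Finset.eq_of_subset_of_card_le hST (by rw [part2, hcardS, e1, e2])
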